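/- For the Lie algebra of type (hc5) with brackets [e₁,e₂]=e₂, [e₁,e₃]=(1/2)e₃, [e₁,e₄]=(1/2)e₄, [e₃,e₄]=(1/2)e₂, the standard hypercomplex structure and metric g(x,y)=x¹y¹+x²y²-x³y³-x⁴y⁴, the only nonzero Lee form components are θ₁(e₂) = -1/2, θ₂(e₃) = 3, θ₃(e₄) = -3. -/
import Mathlib

noncomputable section

/-- The underlying 4-dimensional real vector space. -/
abbrev V : Type := Fin 4 → ℝ

/-- The standard basis of ℝ⁴. -/
def e : Fin 4 → V := fun i => Pi.single i 1

/-- The neutral metric g(x,y) = x¹y¹ + x²y² - x³y³ - x⁴y⁴. -/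
def g (x y : V) : ℝ := x 0 * y 0 + x 1 * y 1 - x 2 * y 2 - x 3 * y 3

/-- J₁ of the standard hypercomplex structure. -/
def J1 (x : V) : V := ![-x 1, x 0, x 3, -x 2]

/-- J₂ of the standard hypercomplex structure. -/
def J2 (x : V) : V := ![-x 2, -x 3, x 0, x 1]

/-- J₃ of the standard hypercomplex structure. -/
def J3 (x : V) : V := ![x 3, -x 2, x 1, -x 0]

/-- The bracket of type (hc5): [e₁,e₂]=e₂, [e₁,e₃]=(1/2)e₃, [e₁,e₄]=(1/2)e₄,
[e₃,e₄]=(1/2)e₂. -/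
def br (x y : V) : V :=
  ![0, x 0 * y 1 - x 1 * y 0 + (1/2) * (x 2 * y 3 - x 3 * y 2),
    (1/2) * (x 0 * y 2 - x 2 * y 0), (1/2) * (x 0 * y 3 - x 3 * y 0)]


/-- Structure tensor F(x,y,z) = g((∇ₓJ)y, z) = g(∇ₓ(Jy) - J(∇ₓy), z). -/
def F (J : V → V) (nabla : V → V → V) (x y z : V) : ℝ :=
  g (nabla x (J y) - J (nabla x y)) z

/-- Lee form θ(z) = Σᵢ gⁱⁱ F(eᵢ,eᵢ,z) with gⁱⁱ = (1,1,-1,-1). -/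
def theta (J : V → V) (nabla : V → V → V) (z : V) : ℝ :=
  F J nabla (e 0) (e 0) z + F J nabla (e 1) (e 1) z
    - F J nabla (e 2) (e 2) z - F J nabla (e 3) (e 3) z
set_option maxHeartbeats 1000000 in
/-- Lee forms of the (hc5) structure: θ₁(e₂)=-1/2, θ₂(e₃)=3, θ₃(e₄)=-3 are the
only nonzero components. -/
theorem hc5_lee_forms (nabla : V → V → V)
    (hK : ∀ x y z : V,
      2 * g (nabla x y) z = g (br x y) z + g (br z x) y + g (br z y) x) :
    (∀ i : Fin 4, theta J1 nabla (e i) = if i = 1 then -1/2 else 0) ∧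
    (∀ i : Fin 4, theta J2 nabla (e i) = if i = 2 then 3 else 0) ∧
    (∀ i : Fin 4, theta J3 nabla (e i) = if i = 3 then -3 else 0) := by
  have e0 : e 0 = ![1,0,0,0] := by funext i; fin_cases i <;> rfl
  have e1 : e 1 = ![0,1,0,0] := by funext i; fin_cases i <;> rfl
  have e2 : e 2 = ![0,0,1,0] := by funext i; fin_cases i <;> rfl
  have e3 : e 3 = ![0,0,0,1] := by funext i; fin_cases i <;> rfl
  have hnab : ∀ x y : V, nabla x y =
      ![x 1 * y 1 - (1/2) * (x 2 * y 2) - (1/2) * (x 3 * y 3),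
        -(x 1 * y 0) + (1/4) * (x 2 * y 3) - (1/4) * (x 3 * y 2),
        -(1/4) * (x 1 * y 3) - (1/2) * (x 2 * y 0) - (1/4) * (x 3 * y 1),
        (1/4) * (x 1 * y 2) + (1/4) * (x 2 * y 1) - (1/2) * (x 3 * y 0)] := by
    intro x y
    funext i
    fin_cases i
    · have h := hK x y (e 0)
      rw [e0] at h
      simp [g, br] at h ⊢
      linarith
    · have h := hK x y (e 1)
      rw [e1] at h
      simp [g, br] at h ⊢
      linarith
    · have h := hK x y (e 2)
      rw [e2] at h
      simp [g, br] at h ⊢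
      linarith
    · have h := hK x y (e 3)
      rw [e3] at h
      simp [g, br] at h ⊢
      linarith
  refine ⟨?_, ?_, ?_⟩ <;> intro i <;> fin_cases i <;>
    simp only [theta, F, g, Pi.sub_apply, e0, e1, e2, e3, hnab, J1, J2, J3,
      Matrix.cons_val_zero, Matrix.cons_val_one, Matrix.head_cons,
      Matrix.cons_val_two, Matrix.tail_cons, Matrix.cons_val_three,
      Matrix.cons_val_fin_one, Matrix.cons_val'] <;>
    norm_num [e, Pi.single_apply, Fin.ext_iff, show ((3:Fin 4):ℕ) = 3 from rfl]
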